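/- arXiv:1612.01300 — 2 statements merged into one kernel-verified Lean document; each statement's English description precedes it below -/
import Mathlib

section
/- Let G be a connected reductive complex algebraic group, Π = {λ₁,…,λ_m} dominant weights, V_Π = ⊕ V(λᵢ), and e ∈ V_Π with all projections π̂ᵢ(e) ≠ 0. If the orbit Ge is spherical, then the stabilizer of the point π(e) = ([e₁],…,[e_m]) ∈ ℙ(V(λ₁)) × ⋯ × ℙ(V(λ_m)) equals the normalizer N_G(G_e) of the stabilizer G_e. -/
/-- let `G` be a (connected reductive) group acting linearly on the simple
modules `V i` via `ρ i`, let `e = (e i)ᵢ` with all `e i ≠ 0`, and let `H = G_e` be the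
common stabilizer.  The sphericality of the orbit `Ge` is used only through its
multiplicity-free consequence: for each `i` the space of `H`-fixed vectors in `V i`
is exactly the line `ℂ·eᵢ` (hypothesis `hsph`).  Then the stabilizer of the point
`π(e) = ([e₁], …, [e_m])` in the product of projective spaces, i.e. the set of `g`
multiplying each `e i` by a nonzero scalar, equals the normalizer `N_G(G_e)`. -/
theorem stabilizer_of_projection_eq_normalizer
    {G : Type*} [Group G] {ι : Type*} {V : ι → Type*}
    [∀ i, AddCommGroup (V i)] [∀ i, Module ℂ (V i)]
    (ρ : ∀ i, Representation ℂ G (V i)) (e : ∀ i, V i) (he : ∀ i, e i ≠ 0)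
    (H : Subgroup G) (hH : ∀ g : G, g ∈ H ↔ ∀ i, ρ i g (e i) = e i)
    (hsph : ∀ i, {v : V i | ∀ h ∈ H, ρ i h v = v} =
      (Submodule.span ℂ {e i} : Submodule ℂ (V i))) :
    ∀ g : G, (∀ i, ∃ c : ℂ, c ≠ 0 ∧ ρ i g (e i) = c • e i) ↔ g ∈ Subgroup.normalizer (H : Set G) := by
  have key : ∀ (g : G) (i : ι) (c : ℂ), c ≠ 0 → ρ i g (e i) = c • e i →
      ρ i g⁻¹ (e i) = c⁻¹ • e i := by
    intro g i c hc hce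
    have h1 : ρ i g⁻¹ (ρ i g (e i)) = e i := by
      rw [← Module.End.mul_apply, ← map_mul, inv_mul_cancel, map_one, Module.End.one_apply]
    rw [hce, map_smul] at h1
    rw [eq_comm, inv_smul_eq_iff₀ hc, h1]
  intro g
  constructor
  · intro hg
    rw [Subgroup.mem_normalizer_iff]
    intro n
    constructor
    · intro hn
      rw [hH] at hn ⊢
      intro i
      obtain ⟨c, hc, hce⟩ := hg i
      have h1 := key g i c hc hce
      have : ρ i (g * n * g⁻¹) (e i) = ρ i g (ρ i n (ρ i g⁻¹ (e i))) := by
        simp [map_mul, Module.End.mul_apply]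
      rw [this, h1, map_smul, hn i, map_smul, hce, smul_smul, inv_mul_cancel₀ hc, one_smul]
    · intro hn
      rw [hH] at hn ⊢
      intro i
      obtain ⟨c, hc, hce⟩ := hg i
      have h1 := key g i c hc hce
      have hn' : n = g⁻¹ * (g * n * g⁻¹) * g := by group
      rw [hn']
      have : ρ i (g⁻¹ * (g * n * g⁻¹) * g) (e i)
          = ρ i g⁻¹ (ρ i (g * n * g⁻¹) (ρ i g (e i))) := by
        simp [map_mul, Module.End.mul_apply]
      rw [this, hce, map_smul, hn i, map_smul, h1, smul_smul, mul_inv_cancel₀ hc, one_smul]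
  · intro hg i
    have hfix : ρ i g (e i) ∈ {v : V i | ∀ h ∈ H, ρ i h v = v} := by
      intro h hh
      have hh' : g⁻¹ * h * g ∈ H := by
        have := (Subgroup.mem_normalizer_iff.mp ((Subgroup.normalizer (H : Set G)).inv_mem hg) h).mp hh
        simpa using this
      have : ρ i h (ρ i g (e i)) = ρ i g (ρ i (g⁻¹ * h * g) (e i)) := by
        have : h * g = g * (g⁻¹ * h * g) := by group
        rw [← Module.End.mul_apply, ← map_mul, this, map_mul, Module.End.mul_apply]
      rw [this, (hH _).mp hh' i]
    rw [hsph i] at hfix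
    obtain ⟨c, hc⟩ := Submodule.mem_span_singleton.mp hfix
    refine ⟨c, ?_, hc.symm⟩
    rintro rfl
    rw [zero_smul] at hc
    apply he i
    have : ρ i g⁻¹ (ρ i g (e i)) = e i := by
      rw [← Module.End.mul_apply, ← map_mul, inv_mul_cancel, map_one, Module.End.one_apply]
    rw [← this, ← hc, map_zero]
end

section
/- In the Hermitian symmetric setting, let Ke ⊂ 𝔭 = 𝔭₁ ⊕ 𝔭₂ be a nilpotent K-orbit and write e = e₁ + e₂ with eᵢ ∈ 𝔭ᵢ. Then ξ₁e₁ + ξ₂e₂ ∈ Ke for all ξ₁, ξ₂ ∈ ℂ*; in particular the orbit closure is a bicone with respect to the decomposition 𝔭 = 𝔭₁ ⊕ 𝔭₂. -/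
/-- Every unit of `ℂ` has an `n`-th root for nonzero integer `n`. -/
lemma units_exists_zpow_eq (u : ℂˣ) {n : ℤ} (hn : n ≠ 0) : ∃ b : ℂˣ, b ^ n = u := by
  have key : ∀ (v : ℂˣ) (k : ℕ), k ≠ 0 → ∃ b : ℂˣ, b ^ k = v := by
    intro v k hk
    obtain ⟨c, hc⟩ := IsAlgClosed.exists_pow_nat_eq (v : ℂ) (Nat.pos_of_ne_zero hk)
    have hc0 : c ≠ 0 := by
      intro h
      apply v.ne_zero
      rw [← hc, h, zero_pow hk]
    refine ⟨Units.mk0 c hc0, ?_⟩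
    ext
    simpa using hc
  rcases n.lt_or_lt_of_ne hn with h | h
  · obtain ⟨b, hb⟩ := key u (-n).toNat (by omega)
    refine ⟨b⁻¹, ?_⟩
    have : ((-n).toNat : ℤ) = -n := Int.toNat_of_nonneg (by omega)
    rw [← zpow_natCast, this] at hb
    rw [inv_zpow', hb]
  · obtain ⟨b, hb⟩ := key u n.toNat (by omega)
    refine ⟨b, ?_⟩
    rw [← zpow_natCast] at hb
    rwa [Int.toNat_of_nonneg (by omega)] at hb

/-- in the Hermitian symmetric setting, let `Ke ⊂ 𝔭 = 𝔭₁ ⊕ 𝔭₂` be a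
nilpotent orbit and `e = e₁ + e₂`.  From the normal `sl₂`-triple one gets a one-parameter
subgroup `t` of `K` scaling both `e₁` and `e₂` by `ξ`, and the central torus `Z_K` gives
a one-parameter subgroup `z` scaling `e₁` by `ξ^m` and `e₂` by `ξ^{-m}` with `m ≠ 0`.
Then `ξ₁e₁ + ξ₂e₂ ∈ Ke` for all `ξ₁, ξ₂ ∈ ℂ*`; i.e. the orbit closure is a bicone. -/
theorem orbit_is_bicone
    {K 𝔭 : Type*} [Group K] [AddCommGroup 𝔭] [Module ℂ 𝔭]
    (ρ : Representation ℂ K 𝔭) (e₁ e₂ : 𝔭)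
    (t z : ℂˣ →* K) (m : ℤ) (hm : m ≠ 0)
    (ht₁ : ∀ ξ : ℂˣ, ρ (t ξ) e₁ = (ξ : ℂ) • e₁)
    (ht₂ : ∀ ξ : ℂˣ, ρ (t ξ) e₂ = (ξ : ℂ) • e₂)
    (hz₁ : ∀ ξ : ℂˣ, ρ (z ξ) e₁ = ((ξ ^ m : ℂˣ) : ℂ) • e₁)
    (hz₂ : ∀ ξ : ℂˣ, ρ (z ξ) e₂ = ((ξ ^ (-m) : ℂˣ) : ℂ) • e₂) :
    ∀ ξ₁ ξ₂ : ℂˣ, ∃ g : K, ρ g (e₁ + e₂) = (ξ₁ : ℂ) • e₁ + (ξ₂ : ℂ) • e₂ := by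
  intro ξ₁ ξ₂
  obtain ⟨b, hb⟩ := units_exists_zpow_eq (ξ₁ * ξ₂⁻¹) (by exact_mod_cast (by omega : (2 : ℤ) * m ≠ 0) : (2 : ℤ) * m ≠ 0)
  set a : ℂˣ := ξ₁ * b ^ (-m) with ha
  refine ⟨t a * z b, ?_⟩
  have ham : a * b ^ m = ξ₁ := by
    rw [ha, mul_assoc, ← zpow_add, neg_add_cancel, zpow_zero, mul_one]
  have ham' : a * b ^ (-m) = ξ₂ := by
    rw [ha, mul_assoc, ← zpow_add]
    have h2 : -m + -m = -(2 * m) := by ring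
    rw [h2, zpow_neg, hb]
    rw [mul_inv_rev, inv_inv, mul_left_comm, mul_inv_cancel, mul_one]
  have key : ρ (t a * z b) (e₁ + e₂) = ((a * b ^ m : ℂˣ) : ℂ) • e₁ + ((a * b ^ (-m) : ℂˣ) : ℂ) • e₂ := by
    rw [map_mul, Module.End.mul_apply, map_add, map_add, hz₁, hz₂, map_smul, map_smul,
      ht₁, ht₂, smul_smul, smul_smul, Units.val_mul, Units.val_mul]
    simp only [ha, Units.val_mul]
    ring_nf
  rw [key, ham, ham']
end
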